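/- Let H be a Hopf algebra over a field of characteristic l > 0, g grouplike, and x a g-primitive semi-invariant with χ^x(g) = 1. Then x^l is a g^l-primitive element. -/

import Mathlib

open Coalgebra TensorProduct

/-- Over a field of prime characteristic `l`, if `x` is `g`-primitive and commutes
with the grouplike element `g` (i.e. `χˣ(g) = 1`), then `x^l` is `g^l`-primitive. -/
theorem pow_char_skewPrimitive {k H : Type*} [Field k] [Ring H] [Bialgebra k H]
    (l : ℕ) (hl : l.Prime) [CharP k l] (g x : H)
    (hg : comul (R := k) g = g ⊗ₜ[k] g ∧ counit (R := k) g = (1 : k))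
    (hx : comul (R := k) x = x ⊗ₜ[k] 1 + g ⊗ₜ[k] x)
    (hcomm : x * g = g * x) :
    comul (R := k) (x ^ l) = (x ^ l) ⊗ₜ[k] 1 + (g ^ l) ⊗ₜ[k] (x ^ l) := by
  have hring : comul (R := k) (x ^ l) = (comul (R := k) x) ^ l := by
    simpa using map_pow (Bialgebra.comulAlgHom k H) x l
  rw [hring, hx]
  have hc : Commute (x ⊗ₜ[k] (1 : H)) (g ⊗ₜ[k] x) := by
    simp only [Commute, SemiconjBy, Algebra.TensorProduct.tmul_mul_tmul, one_mul, mul_one, hcomm]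
  have hl0 : (l : H ⊗[k] H) = 0 := by
    rw [← map_natCast (algebraMap k (H ⊗[k] H)) l, CharP.cast_eq_zero k l, map_zero]
  obtain ⟨r, hr⟩ := hc.exists_add_pow_prime_eq hl
  rw [hr, hl0, zero_mul, zero_mul, zero_mul, add_zero, Algebra.TensorProduct.tmul_pow, Algebra.TensorProduct.tmul_pow,
    one_pow]
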